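/- arXiv:1607.08717 — 5 statements merged into one kernel-verified Lean document; each statement's English description precedes it below -/
import Mathlib

section
/- Let d ≥ 1 and let σ : ℝ^d → S^d be differentiable with a bounded and globally Lipschitz derivative, and set C := σ² (pointwise matrix product σ(x)σ(x)). Then C is continuously differentiable with locally Lipschitz derivative, and for every x ∈ ℝ^d and every u ∈ ℝ^d with σ(x)u = 0 one has Σ_{j=1}^d ⟨u, D(σe_j)(x)(σ(x)e_j)⟩ = Σ_{j=1}^d ⟨u, D(Ce_j)(x)(P_C(x)e_j)⟩. -/
open Matrix Set Asymptotics
open scoped RealInnerProductSpace NNReal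

noncomputable section

/-- `ℝ^d` with the Euclidean inner product and norm. -/
abbrev Vec (d : ℕ) := EuclideanSpace ℝ (Fin d)

/-- real `d × d` matrices. -/
abbrev Mat (d : ℕ) := Matrix (Fin d) (Fin d) ℝ

attribute [local instance] Matrix.seminormedAddCommGroup Matrix.normedAddCommGroup Matrix.normedSpace

/-- The operator-norm seminormed group on `ℝ^d →L[ℝ] Mat d` (port: no longer found automatically,
since `fderiv` now uses the unbundled matrix topology). -/
instance clmSeminormedMat {d : ℕ} : SeminormedAddCommGroup (Vec d →L[ℝ] Mat d) :=
  ContinuousLinearMap.toSeminormedAddCommGroup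

/-- A matrix acting on a vector of `ℝ^d`. -/
def mv {d : ℕ} (A : Mat d) (u : Vec d) : Vec d := WithLp.toLp 2 (A.mulVec u)

/-- The `j`-th canonical basis vector of `ℝ^d`. -/
def evec {d : ℕ} (j : Fin d) : Vec d := EuclideanSpace.single j 1

/-- The first-order normal cone `N¹_D(x)`. -/
def normalCone1 {d : ℕ} (D : Set (Vec d)) (x : Vec d) : Set (Vec d) :=
  {u | ∀ ε > (0:ℝ), ∃ δ > (0:ℝ), ∀ y ∈ D, ‖y - x‖ ≤ δ → ⟪u, y - x⟫ ≤ ε * ‖y - x‖}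

/-- The second-order normal cone `N²_D(x) ⊆ ℝ^d × S^d`. -/
def normalCone2 {d : ℕ} (D : Set (Vec d)) (x : Vec d) : Set (Vec d × Mat d) :=
  {p | p.2.IsSymm ∧ ∀ ε > (0:ℝ), ∃ δ > (0:ℝ), ∀ y ∈ D, ‖y - x‖ ≤ δ →
    ⟪p.1, y - x⟫ + (1/2:ℝ) * ⟪y - x, mv p.2 (y - x)⟫ ≤ ε * ‖y - x‖^2}

/-- The first-order normal cone for subsets of `ℝ`. -/
def normalConeR (D : Set ℝ) (x : ℝ) : Set ℝ :=
  {u | ∀ ε > (0:ℝ), ∃ δ > (0:ℝ), ∀ y ∈ D, |y - x| ≤ δ → u * (y - x) ≤ ε * |y - x|}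

/-- The matrix of the orthogonal projection of `ℝ^d` onto the column space (range) of `A`,
i.e. `A A⁺` with `A⁺` the Moore–Penrose pseudoinverse. -/
def projRange {d : ℕ} (A : Mat d) : Mat d :=
  Matrix.toEuclideanLin.symm
    (((LinearMap.range (Matrix.toEuclideanLin A)).subtypeL.comp
      (Submodule.orthogonalProjectionOnto (LinearMap.range (Matrix.toEuclideanLin A)))).toLinearMap)

/-- The element of `ℝ²` with the two given coordinates. -/
def vec2 (a b : ℝ) : Vec 2 := WithLp.toLp 2 ![a, b]

/-- The Hessian matrix of `φ : ℝ^d → ℝ` at `x`. -/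
def hessMat {d : ℕ} (φ : Vec d → ℝ) (x : Vec d) : Mat d :=
  Matrix.of fun i j => fderiv ℝ (fun y => fderiv ℝ φ y (evec j)) x (evec i)

section auxiliary

variable {d : ℕ}

/-- `mv` as a continuous linear map in the matrix argument. -/
def mvCLM (v : Vec d) : Mat d →L[ℝ] Vec d :=
  LinearMap.toContinuousLinearMap
  { toFun := fun A => mv A v
    map_add' := fun A B => by
      show mv (A + B) v = mv A v + mv B v
      unfold mv; rw [Matrix.add_mulVec, WithLp.toLp_add]
    map_smul' := fun c A => by
      show mv (c • A) v = c • mv A v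
      unfold mv; rw [Matrix.smul_mulVec, WithLp.toLp_smul] }

@[simp] lemma mvCLM_apply (v : Vec d) (A : Mat d) : mvCLM v A = mv A v := rfl

/-- matrix multiplication as a continuous bilinear map. -/
def mulCLM : Mat d →L[ℝ] Mat d →L[ℝ] Mat d :=
  LinearMap.toContinuousLinearMap
  { toFun := fun A => LinearMap.toContinuousLinearMap (LinearMap.mulLeft ℝ A)
    map_add' := fun A B => by
      ext M i j
      simp [add_mul]
    map_smul' := fun c A => by
      ext M i j
      simp [smul_mul_assoc] }

@[simp] lemma mulCLM_apply (A B : Mat d) : mulCLM A B = A * B := rfl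

lemma locallyLipschitz_bilin {X E F G : Type*}
    [NormedAddCommGroup X] [NormedSpace ℝ X]
    [NormedAddCommGroup E] [NormedSpace ℝ E]
    [NormedAddCommGroup F] [NormedSpace ℝ F]
    [NormedAddCommGroup G] [NormedSpace ℝ G]
    (B : E →L[ℝ] F →L[ℝ] G) {f : X → E} {g : X → F}
    (hf : LocallyLipschitz f) (hg : LocallyLipschitz g) :
    LocallyLipschitz fun x => B (f x) (g x) := by
  have h := ((B.isBoundedBilinearMap.contDiff.of_le le_top).locallyLipschitz).comp (hf.prodMk hg)
  exact h

lemma inner_eq_sum (u w : Vec d) : ⟪u, w⟫ = ∑ i, u i * w i := by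
  simp [PiLp.inner_apply, mul_comm]

lemma mv_apply (A : Mat d) (v : Vec d) (i : Fin d) : mv A v i = ∑ l, A i l * v l := by
  simp [mv, Matrix.mulVec, dotProduct]

lemma mv_evec (A : Mat d) (j k : Fin d) : mv A (evec j) k = A k j := by
  simp [mv_apply, evec, EuclideanSpace.single_apply]

lemma inner_mv_single (u : Vec d) (M : Mat d) (j : Fin d) :
    ⟪u, mv M (evec j)⟫ = ∑ i, u i * M i j := by
  simp [inner_eq_sum, mv_evec]

lemma vec_eq_sum (v : Vec d) : v = ∑ k, v k • evec k := by
  ext i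
  rw [show ((∑ k, v k • evec k : Vec d) i) = ∑ k, (v k • evec k : Vec d) i from
    by rw [WithLp.ofLp_sum, Finset.sum_apply]]
  simp [evec, EuclideanSpace.single_apply]

lemma clm_expand (A : Vec d →L[ℝ] Mat d) (v : Vec d) : A v = ∑ k, v k • A (evec k) := by
  conv_lhs => rw [vec_eq_sum v]
  rw [map_sum]
  simp

lemma inner_mv_expand (T : Vec d →L[ℝ] Mat d) (u v w : Vec d) :
    ⟪u, mv (T v) w⟫ = ∑ k, v k * ⟪u, mv (T (evec k)) w⟫ := by
  rw [clm_expand T v, ← mvCLM_apply, map_sum, inner_sum]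
  apply Finset.sum_congr rfl; intro k _
  rw [_root_.map_smul, real_inner_smul_right]
  simp

lemma colsum (M N : Mat d) (u : Vec d) (k : Fin d) :
    ∑ j, N k j * ⟪u, mv M (evec j)⟫ = ∑ i, u i * (M * Nᵀ) i k := by
  simp only [inner_mv_single, Matrix.mul_apply, Matrix.transpose_apply,
    Finset.mul_sum]
  rw [Finset.sum_comm]
  apply Finset.sum_congr rfl; intro i _
  apply Finset.sum_congr rfl; intro j _
  ring

lemma mv_mv (A B : Mat d) (v : Vec d) : mv A (mv B v) = mv (A * B) v := by
  unfold mv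
  rw [Matrix.mulVec_mulVec]

lemma inner_mv_symm {S : Mat d} (hS : S.IsSymm) (u z : Vec d) : ⟪u, mv S z⟫ = ⟪mv S u, z⟫ := by
  simp only [inner_eq_sum, mv_apply, Finset.mul_sum, Finset.sum_mul]
  rw [Finset.sum_comm]
  apply Finset.sum_congr rfl; intro i _
  apply Finset.sum_congr rfl; intro l _
  rw [← hS.apply i l]
  ring

/-- The key algebraic identity behind the statement. -/
lemma key_sum {S P : Mat d} (hS : S.IsSymm) (hP : P.IsSymm) (hSP : S * P = S)
    (T : Vec d →L[ℝ] Mat d) (u : Vec d) :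
    ∑ j, ⟪u, mv (T (mv S (evec j))) (evec j)⟫
      = ∑ j, ⟪u, mv (T (mv P (evec j))) (mv S (evec j))⟫ := by
  have e1 : ∀ j, ⟪u, mv (T (mv S (evec j))) (evec j)⟫
      = ∑ k, S k j * ⟪u, mv (T (evec k)) (evec j)⟫ := by
    intro j
    rw [inner_mv_expand]
    exact Finset.sum_congr rfl fun k _ => by rw [mv_evec]
  have e2 : ∀ j, ⟪u, mv (T (mv P (evec j))) (mv S (evec j))⟫
      = ∑ k, P k j * ⟪u, mv (T (evec k) * S) (evec j)⟫ := by
    intro j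
    rw [inner_mv_expand]
    exact Finset.sum_congr rfl fun k _ => by rw [mv_evec, mv_mv]
  have lhs : ∑ j, ⟪u, mv (T (mv S (evec j))) (evec j)⟫
      = ∑ k, ∑ i, u i * ((T (evec k)) * S) i k := by
    rw [Finset.sum_congr rfl fun j _ => e1 j, Finset.sum_comm]
    exact Finset.sum_congr rfl fun k _ => by rw [colsum (T (evec k)) S u k, hS.eq]
  have rhs : ∑ j, ⟪u, mv (T (mv P (evec j))) (mv S (evec j))⟫
      = ∑ k, ∑ i, u i * ((T (evec k)) * S) i k := by
    rw [Finset.sum_congr rfl fun j _ => e2 j, Finset.sum_comm]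
    exact Finset.sum_congr rfl fun k _ => by
      rw [colsum (T (evec k) * S) P u k, hP.eq, mul_assoc, hSP]
  rw [lhs, rhs]

lemma mv_toEuclideanLin (A : Mat d) (v : Vec d) : mv A v = Matrix.toEuclideanLin A v := rfl

lemma mv_projRange (A : Mat d) (v : Vec d) :
    mv (projRange A) v =
      (LinearMap.range (Matrix.toEuclideanLin A)).starProjection v := by
  rw [mv_toEuclideanLin, projRange, LinearEquiv.apply_symm_apply]
  rfl

lemma toEuclideanLin_mul (A B : Mat d) (v : Vec d) :
    Matrix.toEuclideanLin (A * B) v = Matrix.toEuclideanLin A (Matrix.toEuclideanLin B v) := by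
  rw [← mv_toEuclideanLin, ← mv_toEuclideanLin, ← mv_toEuclideanLin]
  unfold mv
  rw [← Matrix.mulVec_mulVec]

lemma range_sq {S : Mat d} (hS : S.IsSymm) :
    LinearMap.range (Matrix.toEuclideanLin S) ≤
      LinearMap.range (Matrix.toEuclideanLin (S * S)) := by
  set T := Matrix.toEuclideanLin S with hT
  have hsymm : T.IsSymmetric := by
    rw [hT, ← Matrix.isHermitian_iff_isSymmetric]
    rwa [Matrix.IsHermitian, Matrix.conjTranspose_eq_transpose_of_trivial]
  have hcomp : Matrix.toEuclideanLin (S * S) = T ∘ₗ T := by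
    apply LinearMap.ext; intro v
    simp [toEuclideanLin_mul, hT]
  have hker : LinearMap.ker (T ∘ₗ T) = LinearMap.ker T := by
    apply le_antisymm
    · intro v hv
      have h2 : T (T v) = 0 := hv
      have h3 : ⟪T v, T v⟫ = 0 := by
        rw [hsymm v (T v), h2, inner_zero_right]
      exact inner_self_eq_zero.mp h3
    · intro v hv
      have : T v = 0 := hv
      simp [LinearMap.mem_ker, this]
  rw [hcomp]
  have hle : LinearMap.range (T ∘ₗ T) ≤ LinearMap.range T := LinearMap.range_comp_le_range T T
  have hfr : Module.finrank ℝ (LinearMap.range T)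
      ≤ Module.finrank ℝ (LinearMap.range (T ∘ₗ T)) := by
    have h1 := LinearMap.finrank_range_add_finrank_ker T
    have h2 := LinearMap.finrank_range_add_finrank_ker (T ∘ₗ T)
    rw [hker] at h2
    omega
  exact le_of_eq (Submodule.eq_of_le_of_finrank_le hle hfr).symm

lemma apply_eq_inner (w : Vec d) (j : Fin d) : w j = ⟪evec j, w⟫ := by
  simp [inner_eq_sum, evec, EuclideanSpace.single_apply]

lemma projRange_mul_self {S : Mat d} (hS : S.IsSymm) : projRange (S * S) * S = S := by
  apply Matrix.toEuclideanLin.injective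
  apply LinearMap.ext; intro v
  rw [toEuclideanLin_mul, ← mv_toEuclideanLin, mv_projRange]
  have hmem : Matrix.toEuclideanLin S v ∈
      LinearMap.range (Matrix.toEuclideanLin (S * S)) :=
    range_sq hS (LinearMap.mem_range_self _ v)
  rw [Submodule.starProjection_eq_self_iff.mpr hmem]

lemma projRange_isSymm (A : Mat d) : (projRange A).IsSymm := by
  set V := LinearMap.range (Matrix.toEuclideanLin A)
  apply Matrix.ext; intro i j
  rw [Matrix.transpose_apply]
  have h1 : ∀ k l, projRange A k l = ⟪evec k, mv (projRange A) (evec l)⟫ := by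
    intro k l
    rw [← apply_eq_inner, mv_evec]
  rw [h1 j i, h1 i j, mv_projRange, mv_projRange,
    ← Submodule.inner_starProjection_left_eq_right _ (evec i) (evec j)]
  exact real_inner_comm _ _

lemma self_mul_projRange {S : Mat d} (hS : S.IsSymm) : S * projRange (S * S) = S := by
  have h := congrArg Matrix.transpose (projRange_mul_self hS)
  rwa [Matrix.transpose_mul, hS.eq, (projRange_isSymm (S * S)).eq] at h

end auxiliary

/-- If `σ : ℝ^d → S^d` is differentiable with a bounded and globally Lipschitz
derivative and `C := σ²`, then `C` is `C^{1,1}_loc` and for every `x` and every `u` with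
`σ(x)u = 0`, `Σ_j ⟨u, D(σe_j)(x)(σ(x)e_j)⟩ = Σ_j ⟨u, D(Ce_j)(x)(P_C(x)e_j)⟩`. -/
theorem stmt0 {d : ℕ} (hd : 1 ≤ d)
    (σ : Vec d → Mat d) (hσsymm : ∀ x, (σ x).IsSymm)
    (hσdiff : Differentiable ℝ σ)
    (hbdd : ∃ M : ℝ, ∀ x, ‖fderiv ℝ σ x‖ ≤ M)
    (hlip : ∃ K : ℝ≥0, LipschitzWith K (fderiv ℝ σ))
    (C : Vec d → Mat d) (hC : C = fun x => σ x * σ x) :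
    (ContDiff ℝ 1 C ∧ LocallyLipschitz (fderiv ℝ C)) ∧
    ∀ x u : Vec d, mv (σ x) u = 0 →
      ∑ j, ⟪u, fderiv ℝ (fun y => mv (σ y) (evec j)) x (mv (σ x) (evec j))⟫ =
      ∑ j, ⟪u, fderiv ℝ (fun y => mv (C y) (evec j)) x (mv (projRange (C x)) (evec j))⟫ := by
  obtain ⟨K, hK⟩ := hlip
  obtain ⟨M, hM⟩ := hbdd
  have hσlip : LipschitzWith M.toNNReal σ := by
    apply lipschitzWith_of_nnnorm_fderiv_le hσdiff
    intro x
    rw [← norm_toNNReal]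
    exact Real.toNNReal_mono (hM x)
  have hCd : ∀ x, HasFDerivAt C
      (mulCLM.precompR (Vec d) (σ x) (fderiv ℝ σ x)
        + mulCLM.precompL (Vec d) (fderiv ℝ σ x) (σ x)) x := by
    intro x
    rw [hC]
    exact mulCLM.hasFDerivAt_of_bilinear (hσdiff x).hasFDerivAt (hσdiff x).hasFDerivAt
  have hfC : fderiv ℝ C = fun x =>
      (mulCLM.precompR (Vec d) (σ x) (fderiv ℝ σ x)
        + mulCLM.precompL (Vec d) (fderiv ℝ σ x) (σ x)) :=
    funext fun x => (hCd x).fderiv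
  have hll : LocallyLipschitz (fderiv ℝ C) := by
    rw [hfC]
    apply LocallyLipschitz.add
    · exact locallyLipschitz_bilin (mulCLM.precompR (Vec d)) hσlip.locallyLipschitz
        hK.locallyLipschitz
    · exact locallyLipschitz_bilin ((mulCLM.precompL (Vec d)))
        hK.locallyLipschitz hσlip.locallyLipschitz
  refine ⟨⟨contDiff_one_iff_fderiv.mpr ⟨fun x => (hCd x).differentiableAt,
    hll.continuous⟩, hll⟩, ?_⟩
  intro x u hu
  set S := σ x with hS
  set T : Vec d →L[ℝ] Mat d := fderiv ℝ σ x with hT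
  set P : Mat d := projRange (C x) with hPdef
  -- derivative of `y ↦ mv (σ y) (evec j)`
  have hder1 : ∀ j : Fin d, fderiv ℝ (fun y => mv (σ y) (evec j)) x
      = (mvCLM (evec j)).comp T := by
    intro j
    exact ((mvCLM (evec j)).hasFDerivAt.comp x (hσdiff x).hasFDerivAt).fderiv
  have hder2 : ∀ j : Fin d, fderiv ℝ (fun y => mv (C y) (evec j)) x
      = (mvCLM (evec j)).comp (fderiv ℝ C x) := by
    intro j
    exact ((mvCLM (evec j)).hasFDerivAt.comp x ((hCd x).differentiableAt.hasFDerivAt)).fderiv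
  -- the left-hand side
  have eL : ∀ j : Fin d,
      ⟪u, fderiv ℝ (fun y => mv (σ y) (evec j)) x (mv (σ x) (evec j))⟫
        = ⟪u, mv (T (mv S (evec j))) (evec j)⟫ := by
    intro j
    rw [hder1 j]
    rfl
  -- the right-hand side
  have huS : mv S u = 0 := hu
  have hvanish : ∀ z : Vec d, ⟪u, mv S z⟫ = 0 := by
    intro z
    rw [inner_mv_symm (hσsymm x) u z, huS, inner_zero_left]
  have eR : ∀ j : Fin d,
      ⟪u, fderiv ℝ (fun y => mv (C y) (evec j)) x (mv (projRange (C x)) (evec j))⟫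
        = ⟪u, mv (T (mv P (evec j))) (mv S (evec j))⟫ := by
    intro j
    rw [hder2 j]
    have happ : (mvCLM (evec j)).comp (fderiv ℝ C x) (mv P (evec j))
        = mv (S * T (mv P (evec j)) + T (mv P (evec j)) * S) (evec j) := by
      rw [hfC]
      rfl
    rw [happ]
    have hsplit : mv (S * T (mv P (evec j)) + T (mv P (evec j)) * S) (evec j)
        = mv S (mv (T (mv P (evec j))) (evec j)) + mv (T (mv P (evec j))) (mv S (evec j)) := by
      rw [mv_mv, mv_mv]
      unfold mv
      rw [Matrix.add_mulVec, WithLp.toLp_add]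
    rw [hsplit, inner_add_right, hvanish, zero_add]
  rw [Finset.sum_congr rfl fun j _ => eL j, Finset.sum_congr rfl fun j _ => eR j]
  have hCx : C x = S * S := by rw [hC]
  rw [hPdef, hCx]
  exact key_sum (hσsymm x) (projRange_isSymm (S * S)) (self_mul_projRange (hσsymm x)) T u
end
end

section
/- Let D₁ ⊆ ℝ and D₂ ⊆ ℝ be closed sets, let φ : ℝ² → ℝ be continuously differentiable, and set D := {(x̄, x̃) ∈ ℝ² : x̄ ∈ D₁ and φ(x̄, x̃) ∈ D₂}. Fix x = (x̄, x̃) ∈ D with ∂₂φ(x) ≠ 0 (so that the Jacobian of Φ(x̄, x̃) := (x̄, φ(x̄, x̃)) at x is invertible). Then N¹_D(x) = { (ū + ∂₁φ(x)·ũ, ∂₂φ(x)·ũ) : ū ∈ N¹_{D₁}(x̄) and ũ ∈ N¹_{D₂}(φ(x̄, x̃)) }. -/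
open Matrix Set Asymptotics
open scoped RealInnerProductSpace NNReal

noncomputable section

attribute [local instance] Matrix.normedAddCommGroup Matrix.normedSpace

/-! ### Auxiliary lemmas -/

lemma vec2_eta (v : Vec 2) : vec2 (v 0) (v 1) = v := by
  ext i; fin_cases i <;> rfl

lemma inner_vec2 (u v : Vec 2) : ⟪u, v⟫ = u 0 * v 0 + u 1 * v 1 := by
  simp [PiLp.inner_apply, Fin.sum_univ_two, RCLike.inner_apply]
  ring

lemma norm_vec2 (a b : ℝ) : ‖vec2 a b‖ = Real.sqrt (a^2 + b^2) := by
  rw [EuclideanSpace.norm_eq]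
  simp [Fin.sum_univ_two, vec2, sq_abs]

lemma norm_vec2_left (a : ℝ) : ‖vec2 a 0‖ = |a| := by
  rw [norm_vec2]; simp [Real.sqrt_sq_eq_abs]

lemma norm_vec2_right (b : ℝ) : ‖vec2 0 b‖ = |b| := by
  rw [norm_vec2]; simp [Real.sqrt_sq_eq_abs]

lemma abs_coord_le (v : Vec 2) (i : Fin 2) : |v i| ≤ ‖v‖ := by
  have h := abs_real_inner_le_norm (EuclideanSpace.single i (1:ℝ)) v
  rw [EuclideanSpace.inner_single_left] at h
  simpa [EuclideanSpace.norm_single] using h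

lemma vec2_decomp (a b : ℝ) : vec2 a b = a • evec 0 + b • evec 1 := by
  ext i; fin_cases i <;> simp [vec2, evec, EuclideanSpace.single_apply]

lemma clm_formula (L : Vec 2 →L[ℝ] ℝ) (v : Vec 2) :
    L v = L (evec 0) * v 0 + L (evec 1) * v 1 := by
  conv_lhs => rw [← vec2_eta v, vec2_decomp]
  rw [map_add, _root_.map_smul, _root_.map_smul]
  simp [mul_comm]

lemma fderiv_eps {E F : Type*} [NormedAddCommGroup E] [NormedSpace ℝ E]
    [NormedAddCommGroup F] [NormedSpace ℝ F] {f : E → F} {f' : E →L[ℝ] F} {x : E}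
    (h : HasFDerivAt f f' x) : ∀ ε > (0:ℝ), ∃ δ > (0:ℝ), ∀ y,
    ‖y - x‖ ≤ δ → ‖f y - f x - f' (y - x)‖ ≤ ε * ‖y - x‖ := by
  intro ε hε
  have h1 : ∀ᶠ y in nhds x, ‖f y - f x - f' (y - x)‖ ≤ ε * ‖y - x‖ :=
    isLittleO_iff.mp h.isLittleO hε
  rw [Metric.eventually_nhds_iff] at h1
  obtain ⟨δ, hδ, hP⟩ := h1
  refine ⟨δ/2, by linarith, fun y hy => hP ?_⟩
  rw [dist_eq_norm]; linarith

lemma eventually_to_delta {E : Type*} [NormedAddCommGroup E] {x : E} {P : E → Prop}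
    (h : ∀ᶠ q in nhds x, P q) : ∃ δ > (0:ℝ), ∀ q, ‖q - x‖ ≤ δ → P q := by
  rw [Metric.eventually_nhds_iff] at h
  obtain ⟨δ, hδ, hP⟩ := h
  refine ⟨δ/2, by linarith, fun q hq => hP ?_⟩
  rw [dist_eq_norm]; linarith

section Setup
variable (φ : Vec 2 → ℝ) (x : Vec 2)

/-- the derivative map `A v = (v 0, f' v)` -/
def Amap : Vec 2 →L[ℝ] ℝ × ℝ :=
  (EuclideanSpace.proj (0 : Fin 2)).prod (fderiv ℝ φ x)

/-- the inverse map `B (c,d) = vec2 c ((d - a c)/b)` -/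
def Bmap : ℝ × ℝ →L[ℝ] Vec 2 :=
  (EuclideanSpace.equiv (Fin 2) ℝ).symm.toContinuousLinearMap.comp
    (ContinuousLinearMap.pi ![ContinuousLinearMap.fst ℝ ℝ ℝ,
      (fderiv ℝ φ x (evec 1))⁻¹ •
        (ContinuousLinearMap.snd ℝ ℝ ℝ - fderiv ℝ φ x (evec 0) • ContinuousLinearMap.fst ℝ ℝ ℝ)])

lemma Amap_apply (v : Vec 2) : Amap φ x v = (v 0, fderiv ℝ φ x v) := rfl

lemma Bmap_apply (q : ℝ × ℝ) :
    Bmap φ x q = vec2 q.1 ((fderiv ℝ φ x (evec 1))⁻¹ * (q.2 - fderiv ℝ φ x (evec 0) * q.1)) := by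
  ext i
  fin_cases i <;>
    simp [Bmap, vec2, ContinuousLinearMap.pi_apply, smul_eq_mul]

/-- the continuous linear equivalence with `Amap` and `Bmap` as the two directions. -/
def Aequiv (hnd : fderiv ℝ φ x (evec 1) ≠ 0) : Vec 2 ≃L[ℝ] ℝ × ℝ :=
  ContinuousLinearEquiv.equivOfInverse (Amap φ x) (Bmap φ x)
    (fun v => by
      rw [Amap_apply, Bmap_apply]
      have hf := clm_formula (fderiv ℝ φ x) v
      have : (fderiv ℝ φ x (evec 1))⁻¹ *
          ((fderiv ℝ φ x v) - fderiv ℝ φ x (evec 0) * v 0) = v 1 := by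
        rw [hf]; field_simp; ring
      rw [this]; exact vec2_eta v)
    (fun q => by
      rw [Bmap_apply, Amap_apply]
      have h0 : (vec2 q.1 ((fderiv ℝ φ x (evec 1))⁻¹ * (q.2 - fderiv ℝ φ x (evec 0) * q.1))) 0
          = q.1 := rfl
      have h1 : (vec2 q.1 ((fderiv ℝ φ x (evec 1))⁻¹ * (q.2 - fderiv ℝ φ x (evec 0) * q.1))) 1
          = (fderiv ℝ φ x (evec 1))⁻¹ * (q.2 - fderiv ℝ φ x (evec 0) * q.1) := rfl
      have h2 : fderiv ℝ φ x
          (vec2 q.1 ((fderiv ℝ φ x (evec 1))⁻¹ * (q.2 - fderiv ℝ φ x (evec 0) * q.1))) = q.2 := by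
        rw [clm_formula, h0, h1]
        field_simp
        ring
      rw [h0, h2])

end Setup

set_option maxHeartbeats 400000 in
/-- description of the first-order normal cone of
`D = {(x̄, x̃) : x̄ ∈ D₁, φ(x̄, x̃) ∈ D₂}` at a point where `∂₂φ(x) ≠ 0`. -/
theorem stmt5 (D₁ D₂ : Set ℝ) (hD₁ : IsClosed D₁) (hD₂ : IsClosed D₂)
    (φ : Vec 2 → ℝ) (hφ : ContDiff ℝ 1 φ)
    (D : Set (Vec 2)) (hD : D = {p : Vec 2 | p 0 ∈ D₁ ∧ φ p ∈ D₂})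
    (x : Vec 2) (hx : x ∈ D) (hnd : fderiv ℝ φ x (evec 1) ≠ 0) :
    normalCone1 D x =
      {w : Vec 2 | ∃ ub ∈ normalConeR D₁ (x 0), ∃ ut ∈ normalConeR D₂ (φ x),
        w = vec2 (ub + fderiv ℝ φ x (evec 0) * ut) (fderiv ℝ φ x (evec 1) * ut)} := by
  set a := fderiv ℝ φ x (evec 0) with ha
  set b := fderiv ℝ φ x (evec 1) with hb
  have hx1 : x 0 ∈ D₁ := (hD ▸ hx).1
  have hx2 : φ x ∈ D₂ := (hD ▸ hx).2
  have hdφ : HasFDerivAt φ (fderiv ℝ φ x) x :=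
    (hφ.differentiable one_ne_zero).differentiableAt.hasFDerivAt
  ext w
  constructor
  · -- ⊆ : the hard direction, via the inverse function theorem
    intro hw
    set ut := w 1 / b with hut
    set ub := w 0 - a * ut with hub
    have hφs : HasStrictFDerivAt φ (fderiv ℝ φ x) x :=
      hφ.contDiffAt.hasStrictFDerivAt one_ne_zero
    have hΦs : HasStrictFDerivAt (fun p : Vec 2 => (p 0, φ p))
        ((Aequiv φ x hnd : Vec 2 →L[ℝ] ℝ × ℝ)) x :=
      HasStrictFDerivAt.prodMk ((EuclideanSpace.proj (0 : Fin 2) : Vec 2 →L[ℝ] ℝ).hasStrictFDerivAt (x := x)) hφs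
    set Φ : Vec 2 → ℝ × ℝ := fun p => (p 0, φ p) with hΦ
    set ψ := hΦs.localInverse Φ (Aequiv φ x hnd) x with hψ
    have hψd : HasStrictFDerivAt ψ
        (((Aequiv φ x hnd).symm : ℝ × ℝ →L[ℝ] Vec 2)) (Φ x) := hΦs.to_localInverse
    have hsymmB : ∀ q, ((Aequiv φ x hnd).symm : ℝ × ℝ →L[ℝ] Vec 2) q = Bmap φ x q :=
      fun q => rfl
    have hψx : ψ (Φ x) = x := hΦs.localInverse_apply_image
    have hwB : ∀ q : ℝ × ℝ, ⟪w, Bmap φ x q⟫ = ub * q.1 + ut * q.2 := by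
      intro q
      rw [Bmap_apply, inner_vec2]
      have h0 : (vec2 q.1 (b⁻¹ * (q.2 - a * q.1))) 0 = q.1 := rfl
      have h1 : (vec2 q.1 (b⁻¹ * (q.2 - a * q.1))) 1 = b⁻¹ * (q.2 - a * q.1) := rfl
      rw [h0, h1, hub, hut]
      field_simp
      ring
    -- the key claim
    have claim : ∀ ε > (0:ℝ), ∃ δ > (0:ℝ), ∀ q : ℝ × ℝ, q.1 ∈ D₁ → q.2 ∈ D₂ →
        ‖q - Φ x‖ ≤ δ → ub * (q.1 - x 0) + ut * (q.2 - φ x) ≤ ε * ‖q - Φ x‖ := by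
      intro ε hε
      set M := ‖((Aequiv φ x hnd).symm : ℝ × ℝ →L[ℝ] Vec 2)‖ with hM
      have hM0 : 0 ≤ M := norm_nonneg _
      obtain ⟨δw, hδw, hPw⟩ := hw (ε / (2 * (M + 1))) (by positivity)
      have hε2 : (0:ℝ) < min 1 (ε / (2 * (‖w‖ + 1))) := by positivity
      obtain ⟨δ₂, hδ₂, hP₂⟩ := fderiv_eps hψd.hasFDerivAt _ hε2
      obtain ⟨δr, hδr, hPr⟩ := eventually_to_delta hΦs.eventually_right_inverse
      refine ⟨min δr (min δ₂ (δw / (M + 1))), by positivity, fun q hq1 hq2 hqδ => ?_⟩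
      set y := ψ q with hy
      have hqr : ‖q - Φ x‖ ≤ δr := le_trans hqδ (min_le_left _ _)
      have hq2' : ‖q - Φ x‖ ≤ δ₂ := le_trans hqδ (le_trans (min_le_right _ _) (min_le_left _ _))
      have hq3 : ‖q - Φ x‖ ≤ δw / (M + 1) :=
        le_trans hqδ (le_trans (min_le_right _ _) (min_le_right _ _))
      have hinv : Φ y = q := hPr q hqr
      have hrem : ‖y - x - Bmap φ x (q - Φ x)‖ ≤
          min 1 (ε / (2 * (‖w‖ + 1))) * ‖q - Φ x‖ := by
        have := hP₂ q hq2'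
        rwa [hψx, hsymmB] at this
      have hBle : ‖Bmap φ x (q - Φ x)‖ ≤ M * ‖q - Φ x‖ := by
        rw [← hsymmB]; exact ContinuousLinearMap.le_opNorm _ _
      have hyx : ‖y - x‖ ≤ (M + 1) * ‖q - Φ x‖ := by
        have h1 : ‖y - x‖ ≤ ‖Bmap φ x (q - Φ x)‖ + ‖y - x - Bmap φ x (q - Φ x)‖ := by
          have := norm_add_le (Bmap φ x (q - Φ x)) (y - x - Bmap φ x (q - Φ x))
          simpa using this
        have h2 : min 1 (ε / (2 * (‖w‖ + 1))) * ‖q - Φ x‖ ≤ 1 * ‖q - Φ x‖ :=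
          mul_le_mul_of_nonneg_right (min_le_left _ _) (norm_nonneg _)
        nlinarith [norm_nonneg (q - Φ x)]
      have hyD : y ∈ D := by
        rw [hD]
        refine ⟨?_, ?_⟩
        · have h1' : y 0 = q.1 := congrArg Prod.fst hinv
          rw [h1']; exact hq1
        · have h2' : φ y = q.2 := congrArg Prod.snd hinv
          rw [h2']; exact hq2
      have hyδw : ‖y - x‖ ≤ δw := by
        calc ‖y - x‖ ≤ (M + 1) * ‖q - Φ x‖ := hyx
          _ ≤ (M + 1) * (δw / (M + 1)) := by
              exact mul_le_mul_of_nonneg_left hq3 (by linarith)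
          _ = δw := by field_simp
      have hw1 : ⟪w, y - x⟫ ≤ ε / (2 * (M + 1)) * ‖y - x‖ := hPw y hyD hyδw
      have hw2 : ⟪w, y - x⟫ ≤ ε / 2 * ‖q - Φ x‖ := by
        calc ⟪w, y - x⟫ ≤ ε / (2 * (M + 1)) * ‖y - x‖ := hw1
          _ ≤ ε / (2 * (M + 1)) * ((M + 1) * ‖q - Φ x‖) := by
              exact mul_le_mul_of_nonneg_left hyx (by positivity)
          _ = ε / 2 * ‖q - Φ x‖ := by field_simp
      have hsplit : ub * (q.1 - x 0) + ut * (q.2 - φ x) =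
          ⟪w, y - x⟫ + ⟪w, Bmap φ x (q - Φ x) - (y - x)⟫ := by
        rw [← inner_add_right]
        have : (y - x) + (Bmap φ x (q - Φ x) - (y - x)) = Bmap φ x (q - Φ x) := by abel
        rw [this, hwB]
        have e1 : (q - Φ x).1 = q.1 - x 0 := rfl
        have e2 : (q - Φ x).2 = q.2 - φ x := rfl
        rw [e1, e2]
      have hlast : ⟪w, Bmap φ x (q - Φ x) - (y - x)⟫ ≤ ε / 2 * ‖q - Φ x‖ := by
        have h1 : ⟪w, Bmap φ x (q - Φ x) - (y - x)⟫ ≤ ‖w‖ * ‖Bmap φ x (q - Φ x) - (y - x)‖ := by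
          have := abs_real_inner_le_norm w (Bmap φ x (q - Φ x) - (y - x))
          exact le_trans (le_abs_self _) this
        have h2 : ‖Bmap φ x (q - Φ x) - (y - x)‖ ≤ ε / (2 * (‖w‖ + 1)) * ‖q - Φ x‖ := by
          have := hrem
          rw [show y - x - Bmap φ x (q - Φ x) = -(Bmap φ x (q - Φ x) - (y - x)) by abel,
            norm_neg] at this
          exact le_trans this
            (mul_le_mul_of_nonneg_right (min_le_right _ _) (norm_nonneg _))
        have hkey : ‖w‖ * (ε / (2 * (‖w‖ + 1))) ≤ ε / 2 := by
          have hmul := mul_le_mul_of_nonneg_right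
            (show ‖w‖ ≤ ‖w‖ + 1 by linarith)
            (show (0:ℝ) ≤ ε / (2 * (‖w‖ + 1)) by positivity)
          have heq : (‖w‖ + 1) * (ε / (2 * (‖w‖ + 1))) = ε / 2 := by
            field_simp
          linarith
        calc ⟪w, Bmap φ x (q - Φ x) - (y - x)⟫ ≤ ‖w‖ * (ε / (2 * (‖w‖ + 1)) * ‖q - Φ x‖) := by
              exact le_trans h1 (mul_le_mul_of_nonneg_left h2 (norm_nonneg _))
          _ = ‖w‖ * (ε / (2 * (‖w‖ + 1))) * ‖q - Φ x‖ := by ring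
          _ ≤ ε / 2 * ‖q - Φ x‖ :=
              mul_le_mul_of_nonneg_right hkey (norm_nonneg _)
      rw [hsplit]
      linarith
    -- extract the two memberships
    have hΦx1 : (Φ x).1 = x 0 := rfl
    have hΦx2 : (Φ x).2 = φ x := rfl
    refine ⟨ub, ?_, ut, ?_, ?_⟩
    · intro ε hε
      obtain ⟨δ, hδ, hP⟩ := claim ε hε
      refine ⟨δ, hδ, fun z hz hzd => ?_⟩
      have hq : ((z, φ x) : ℝ × ℝ) - Φ x = (z - x 0, 0) := by
        simp [Prod.ext_iff, hΦx1, hΦx2]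
      have hnq : ‖((z, φ x) : ℝ × ℝ) - Φ x‖ = |z - x 0| := by
        rw [hq, Prod.norm_def]
        simp [Real.norm_eq_abs]
      have := hP (z, φ x) hz hx2 (by rw [hnq]; exact hzd)
      rw [hnq] at this
      simpa using this
    · intro ε hε
      obtain ⟨δ, hδ, hP⟩ := claim ε hε
      refine ⟨δ, hδ, fun z hz hzd => ?_⟩
      have hq : ((x 0, z) : ℝ × ℝ) - Φ x = (0, z - φ x) := by
        simp [Prod.ext_iff, hΦx1, hΦx2]
      have hnq : ‖((x 0, z) : ℝ × ℝ) - Φ x‖ = |z - φ x| := by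
        rw [hq, Prod.norm_def]
        simp [Real.norm_eq_abs]
      have := hP (x 0, z) hx1 hz (by rw [hnq]; exact hzd)
      rw [hnq] at this
      simpa using this
    · have h1 : ub + a * ut = w 0 := by rw [hub]; ring
      have h2 : b * ut = w 1 := by rw [hut]; field_simp
      rw [h1, h2, vec2_eta]
  · -- ⊇ : straightforward direction
    rintro ⟨ub, hubm, ut, hutm, hwE⟩
    intro ε hε
    set C := ‖fderiv ℝ φ x‖ + 1 with hC
    have hC0 : (0:ℝ) < C := by positivity
    obtain ⟨δ₁, hδ₁, hP₁⟩ := hubm (ε / 4) (by positivity)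
    obtain ⟨δB, hδB, hPB⟩ := fderiv_eps hdφ 1 one_pos
    obtain ⟨δ₂, hδ₂, hP₂⟩ := hutm (ε / (4 * C)) (by positivity)
    obtain ⟨δ₃, hδ₃, hP₃⟩ := fderiv_eps hdφ (ε / (4 * (|ut| + 1))) (by positivity)
    refine ⟨min δ₁ (min δ₃ (min δB (δ₂ / C))), by positivity, fun y hy hyδ => ?_⟩
    have hy1 : y 0 ∈ D₁ := (hD ▸ hy).1
    have hy2 : φ y ∈ D₂ := (hD ▸ hy).2
    have hn1 : ‖y - x‖ ≤ δ₁ := le_trans hyδ (min_le_left _ _)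
    have hn3 : ‖y - x‖ ≤ δ₃ := le_trans hyδ (le_trans (min_le_right _ _) (min_le_left _ _))
    have hnB : ‖y - x‖ ≤ δB := le_trans hyδ
      (le_trans (min_le_right _ _) (le_trans (min_le_right _ _) (min_le_left _ _)))
    have hn2 : ‖y - x‖ ≤ δ₂ / C := le_trans hyδ
      (le_trans (min_le_right _ _) (le_trans (min_le_right _ _) (min_le_right _ _)))
    have hcoord : (y - x) 0 = y 0 - x 0 := rfl
    have hcoord1 : (y - x) 1 = y 1 - x 1 := rfl
    -- bound on |φ y - φ x|
    have hder : |φ y - φ x - fderiv ℝ φ x (y - x)| ≤ 1 * ‖y - x‖ := by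
      simpa [Real.norm_eq_abs] using hPB y hnB
    have hfb : |fderiv ℝ φ x (y - x)| ≤ ‖fderiv ℝ φ x‖ * ‖y - x‖ := by
      simpa [Real.norm_eq_abs] using (fderiv ℝ φ x).le_opNorm (y - x)
    have hφbound : |φ y - φ x| ≤ C * ‖y - x‖ := by
      have := abs_sub_abs_le_abs_sub (φ y - φ x) (φ y - φ x - fderiv ℝ φ x (y - x))
      have habs : |φ y - φ x| ≤ |φ y - φ x - fderiv ℝ φ x (y - x)| + |fderiv ℝ φ x (y - x)| := by
        simpa using abs_add_le (φ y - φ x - fderiv ℝ φ x (y - x)) (fderiv ℝ φ x (y - x))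
      rw [hC]; nlinarith
    -- the three terms
    have hT1 : ub * (y 0 - x 0) ≤ ε / 4 * ‖y - x‖ := by
      have h := hP₁ (y 0) hy1 (le_trans (hcoord ▸ abs_coord_le (y - x) 0) hn1)
      calc ub * (y 0 - x 0) ≤ ε / 4 * |y 0 - x 0| := h
        _ ≤ ε / 4 * ‖y - x‖ := by
            have := hcoord ▸ abs_coord_le (y - x) 0
            nlinarith
    have hT2 : ut * (φ y - φ x) ≤ ε / 4 * ‖y - x‖ := by
      have hin : |φ y - φ x| ≤ δ₂ := by
        calc |φ y - φ x| ≤ C * ‖y - x‖ := hφbound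
          _ ≤ C * (δ₂ / C) := mul_le_mul_of_nonneg_left hn2 hC0.le
          _ = δ₂ := by field_simp
      have h := hP₂ (φ y) hy2 hin
      calc ut * (φ y - φ x) ≤ ε / (4 * C) * |φ y - φ x| := h
        _ ≤ ε / (4 * C) * (C * ‖y - x‖) := by
            exact mul_le_mul_of_nonneg_left hφbound (by positivity)
        _ = ε / 4 * ‖y - x‖ := by field_simp
    have hT3 : ut * (fderiv ℝ φ x (y - x) - (φ y - φ x)) ≤ ε / 4 * ‖y - x‖ := by
      have h := hP₃ y hn3
      rw [Real.norm_eq_abs] at h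
      have h' : |fderiv ℝ φ x (y - x) - (φ y - φ x)| ≤ ε / (4 * (|ut| + 1)) * ‖y - x‖ := by
        rw [show fderiv ℝ φ x (y - x) - (φ y - φ x)
            = -(φ y - φ x - fderiv ℝ φ x (y - x)) by ring, abs_neg]
        exact h
      calc ut * (fderiv ℝ φ x (y - x) - (φ y - φ x))
          ≤ |ut| * |fderiv ℝ φ x (y - x) - (φ y - φ x)| := by
            exact le_trans (le_abs_self _) (le_of_eq (abs_mul _ _))
        _ ≤ |ut| * (ε / (4 * (|ut| + 1)) * ‖y - x‖) := by
            exact mul_le_mul_of_nonneg_left h' (abs_nonneg _)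
        _ = |ut| * (ε / (4 * (|ut| + 1))) * ‖y - x‖ := by ring
        _ ≤ ε / 4 * ‖y - x‖ := by
            have hkey : |ut| * (ε / (4 * (|ut| + 1))) ≤ ε / 4 := by
              have hmul := mul_le_mul_of_nonneg_right
                (show |ut| ≤ |ut| + 1 by linarith)
                (show (0:ℝ) ≤ ε / (4 * (|ut| + 1)) by positivity)
              have heq : (|ut| + 1) * (ε / (4 * (|ut| + 1))) = ε / 4 := by
                field_simp
              linarith
            exact mul_le_mul_of_nonneg_right hkey (norm_nonneg _)
    -- combine
    have hsplit : ⟪w, y - x⟫ = ub * (y 0 - x 0) + ut * (φ y - φ x)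
        + ut * (fderiv ℝ φ x (y - x) - (φ y - φ x)) := by
      rw [inner_vec2, hwE]
      have e0 : vec2 (ub + a * ut) (b * ut) 0 = ub + a * ut := rfl
      have e1 : vec2 (ub + a * ut) (b * ut) 1 = b * ut := rfl
      rw [e0, e1, hcoord, hcoord1, clm_formula (fderiv ℝ φ x) (y - x), hcoord, hcoord1,
        ← ha, ← hb]
      ring
    rw [hsplit]
    have : ε / 4 * ‖y - x‖ + ε / 4 * ‖y - x‖ + ε / 4 * ‖y - x‖ ≤ ε * ‖y - x‖ := by
      nlinarith [norm_nonneg (y - x), hε.le]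
    linarith
end
end

section
/- Let D₁ ⊆ ℝ and D₂ ⊆ ℝ be closed, φ : ℝ² → ℝ continuously differentiable, D := {(x̄, x̃) ∈ ℝ² : x̄ ∈ D₁, φ(x̄, x̃) ∈ D₂}, and let x = (x̄, x̃) be a boundary point of D with ∂₂φ(x) ≠ 0. Let C : ℝ² → S² be differentiable at x, b : ℝ² → ℝ², and let u = (u₁, u₂) := (ū + ∂₁φ(x)·ũ, ∂₂φ(x)·ũ) with ū ∈ N¹_{D₁}(x̄), ũ ∈ N¹_{D₂}(φ(x̄, x̃)) and ũ ≠ 0 (hence u₂ ≠ 0). Then the conditions [C(x)u = 0 and ⟨u, b(x) − ½ Σ_{j=1}^2 D(Ce_j)(x)(P_C(x)e_j)⟩ ≤ 0] hold if and only if: C(x) = C₁₁(x) · [[1, −u₁/u₂], [−u₁/u₂, u₁²/u₂²]] and ⟨u, b(x)⟩ − (𝟙_{C₁₁(x) ≠ 0} / (2(u₁² + u₂²))) · ( u₁u₂ ∂_u(C₁₁ − C₂₂)(x) + (u₂² − u₁²) ∂_u C₁₂(x) ) ≤ 0, where ∂_u := u₂ ∂₁ − u₁ ∂₂ acts on the real-valued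 entry functions C_{ij} of C. -/
open Matrix Set Asymptotics
open scoped RealInnerProductSpace NNReal

noncomputable section

attribute [local instance] Matrix.normedAddCommGroup Matrix.normedSpace

section Helpers

lemma mv_eq {d : ℕ} [DecidableEq (Fin d)] (A : Mat d) (w : Vec d) : mv A w = Matrix.toEuclideanLin A w := rfl

lemma projRange_apply {d : ℕ} (A : Mat d) (w : Vec d) :
    mv (projRange A) w = Submodule.orthogonalProjectionOnto (LinearMap.range (Matrix.toEuclideanLin A)) w := by
  rw [mv_eq, projRange, LinearEquiv.apply_symm_apply]
  rfl

lemma projRange_zero {d : ℕ} (w : Vec d) : mv (projRange (0 : Mat d)) w = 0 := by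
  rw [projRange_apply]
  have : LinearMap.range (Matrix.toEuclideanLin (0 : Mat d)) = ⊥ := by
    rw [map_zero, LinearMap.range_zero]
  have hm := (Submodule.orthogonalProjectionOnto (LinearMap.range (Matrix.toEuclideanLin (0:Mat d))) w).2
  simpa using this.le hm

lemma projRange_span (A : Mat 2) (v : Vec 2)
    (h : LinearMap.range (Matrix.toEuclideanLin A) = (ℝ ∙ v)) (w : Vec 2) :
    mv (projRange A) w = (⟪v, w⟫ / ‖v‖^2) • v := by
  have hK : ∀ K : Submodule ℝ (Vec 2), K = (ℝ ∙ v) →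
      K.starProjection w = (⟪v, w⟫ / ((‖v‖ ^ 2 : ℝ) : ℝ)) • v := by
    rintro K rfl; exact Submodule.starProjection_singleton ℝ w
  rw [projRange_apply, ← Submodule.starProjection_apply, hK _ h]

lemma range_CM (c u₁ u₂ : ℝ) (hc : c ≠ 0) (hu2 : u₂ ≠ 0)
    (A : Mat 2) (hA : A = c • !![1, -u₁/u₂; -u₁/u₂, u₁^2/u₂^2]) :
    LinearMap.range (Matrix.toEuclideanLin A) = (ℝ ∙ (vec2 u₂ (-u₁))) := by
  apply le_antisymm
  · rintro _ ⟨w, rfl⟩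
    rw [Submodule.mem_span_singleton]
    refine ⟨c * (w 0 - u₁/u₂ * w 1) / u₂, ?_⟩
    subst hA
    refine PiLp.ext fun i => ?_
    fin_cases i <;>
      simp [vec2, ← mv_eq, mv, Matrix.mulVec, dotProduct, Fin.sum_univ_two,
        Matrix.smul_apply, PiLp.smul_apply] <;> field_simp <;> ring
  · rw [Submodule.span_singleton_le_iff_mem]
    refine ⟨(u₂/c) • evec 0, ?_⟩
    subst hA
    refine PiLp.ext fun i => ?_
    fin_cases i <;>
      simp [vec2, ← mv_eq, mv, Matrix.mulVec, dotProduct, Fin.sum_univ_two, evec,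
        EuclideanSpace.single_apply, Matrix.smul_apply, PiLp.smul_apply] <;> field_simp <;> ring

/-- entry extraction as a linear map -/
def eL (i j : Fin 2) : Mat 2 →ₗ[ℝ] ℝ where
  toFun A := A i j
  map_add' A B := rfl
  map_smul' c A := rfl

/-- column extraction as a linear map into `Vec 2` -/
def cL (j : Fin 2) : Mat 2 →ₗ[ℝ] Vec 2 where
  toFun A := (WithLp.equiv 2 (Fin 2 → ℝ)).symm (fun i => A i j)
  map_add' A B := rfl
  map_smul' c A := rfl

def eCLM (i j : Fin 2) : Mat 2 →L[ℝ] ℝ := LinearMap.toContinuousLinearMap (eL i j)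
def cCLM (j : Fin 2) : Mat 2 →L[ℝ] Vec 2 := LinearMap.toContinuousLinearMap (cL j)

lemma eCLM_apply (i j : Fin 2) (A : Mat 2) : eCLM i j A = A i j := rfl
lemma cCLM_apply (j : Fin 2) (A : Mat 2) (i : Fin 2) : cCLM j A i = A i j := rfl

variable {C : Vec 2 → Mat 2} {x : Vec 2}

lemma entry_diff (hC : DifferentiableAt ℝ C x) (i j : Fin 2) :
    DifferentiableAt ℝ (fun y => C y i j) x :=
  ((eCLM i j).differentiableAt).comp x hC

lemma entry_fderiv (hC : DifferentiableAt ℝ C x) (i j : Fin 2) (h : Vec 2) :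
    fderiv ℝ (fun y => C y i j) x h = fderiv ℝ C x h i j := by
  have : (fun y => C y i j) = (eCLM i j) ∘ C := rfl
  rw [this, fderiv_comp x ((eCLM i j).differentiableAt) hC]
  exact congrArg (fun L : Mat 2 →L[ℝ] ℝ => L (fderiv ℝ C x h)) ((eCLM i j).fderiv)

lemma col_fderiv (hC : DifferentiableAt ℝ C x) (j : Fin 2) (h : Vec 2) :
    fderiv ℝ (fun y => mv (C y) (evec j)) x h = cCLM j (fderiv ℝ C x h) := by
  have he : (fun y => mv (C y) (evec j)) = (cCLM j) ∘ C := by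
    funext y
    refine PiLp.ext fun i => ?_
    simp [cCLM_apply, Function.comp, mv, Matrix.mulVec, dotProduct,
      Fin.sum_univ_two, evec, EuclideanSpace.single_apply]
  rw [he, fderiv_comp x ((cCLM j).differentiableAt) hC]
  exact congrArg (fun L : Mat 2 →L[ℝ] Vec 2 => L (fderiv ℝ C x h)) ((cCLM j).fderiv)

lemma inner2 (a b : Vec 2) : ⟪a, b⟫ = a 0 * b 0 + a 1 * b 1 := by
  simp [PiLp.inner_apply, Fin.sum_univ_two, RCLike.inner_apply, mul_comm]

lemma vec2_decomp_s6 (w : Vec 2) : w = w 0 • evec 0 + w 1 • evec 1 := by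
  refine PiLp.ext fun i => ?_
  fin_cases i <;>
    simp [evec, EuclideanSpace.single_apply, PiLp.add_apply, PiLp.smul_apply]

lemma fderiv_entry_symm (hC : DifferentiableAt ℝ C x) (hS : ∀ y, (C y).IsSymm) (h : Vec 2) :
    fderiv ℝ C x h 1 0 = fderiv ℝ C x h 0 1 := by
  have he : (fun y => C y 1 0) = fun y => C y 0 1 := funext fun y => (hS y).apply 0 1
  rw [← entry_fderiv hC 1 0 h, he, entry_fderiv hC 0 1 h]

lemma part1 (hS : (C x).IsSymm) (u₁ u₂ : ℝ) (hu₂ : u₂ ≠ 0) :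
    mv (C x) (vec2 u₁ u₂) = 0 ↔
      C x = C x 0 0 • !![1, -u₁/u₂; -u₁/u₂, u₁^2/u₂^2] := by
  have hsym : C x 1 0 = C x 0 1 := hS.apply 0 1
  constructor
  · intro h
    have h0 := congrArg (fun v : Vec 2 => v 0) h
    have h1 := congrArg (fun v : Vec 2 => v 1) h
    simp [mv, Matrix.mulVec, dotProduct, Fin.sum_univ_two, vec2] at h0 h1
    ext i j
    fin_cases i <;> fin_cases j <;> simp [Matrix.smul_apply] <;> field_simp
    · linear_combination h0
    · linear_combination u₂ * hsym + h0
    · linear_combination u₂ * h1 - u₁ * h0 - u₁ * u₂ * hsym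
  · intro h
    set c := C x 0 0 with hc
    rw [h]
    refine PiLp.ext fun i => ?_
    fin_cases i <;>
      simp [mv, Matrix.mulVec, dotProduct, Fin.sum_univ_two, vec2,
        Matrix.smul_apply] <;> field_simp <;> ring


end Helpers

/-- equivalent form of the first-order conditions at a boundary point of
`D = {(x̄, x̃) : x̄ ∈ D₁, φ(x̄, x̃) ∈ D₂}` for a normal direction with `ũ ≠ 0`. -/
theorem stmt6 (D₁ D₂ : Set ℝ) (hD₁ : IsClosed D₁) (hD₂ : IsClosed D₂)
    (φ : Vec 2 → ℝ) (hφ : ContDiff ℝ 1 φ)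
    (D : Set (Vec 2)) (hD : D = {p : Vec 2 | p 0 ∈ D₁ ∧ φ p ∈ D₂})
    (x : Vec 2) (hx : x ∈ frontier D) (hnd : fderiv ℝ φ x (evec 1) ≠ 0)
    (C : Vec 2 → Mat 2) (hCsymm : ∀ y, (C y).IsSymm) (hCdiff : DifferentiableAt ℝ C x)
    (b : Vec 2 → Vec 2)
    (ub ut : ℝ) (hub : ub ∈ normalConeR D₁ (x 0)) (hut : ut ∈ normalConeR D₂ (φ x))
    (hut0 : ut ≠ 0)
    (u₁ u₂ : ℝ) (hu₁ : u₁ = ub + fderiv ℝ φ x (evec 0) * ut)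
    (hu₂ : u₂ = fderiv ℝ φ x (evec 1) * ut)
    (u : Vec 2) (hu : u = vec2 u₁ u₂) :
    (mv (C x) u = 0 ∧
      ⟪u, b x - (1/2 : ℝ) •
        ∑ j, fderiv ℝ (fun y => mv (C y) (evec j)) x (mv (projRange (C x)) (evec j))⟫ ≤ 0)
    ↔
    (C x = C x 0 0 • !![1, -u₁/u₂; -u₁/u₂, u₁^2/u₂^2] ∧
      ⟪u, b x⟫ - (if C x 0 0 ≠ 0 then (1:ℝ) else 0) / (2 * (u₁^2 + u₂^2)) *
        (u₁ * u₂ * (u₂ * fderiv ℝ (fun y => C y 0 0 - C y 1 1) x (evec 0) -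
                    u₁ * fderiv ℝ (fun y => C y 0 0 - C y 1 1) x (evec 1)) +
         (u₂^2 - u₁^2) * (u₂ * fderiv ℝ (fun y => C y 0 1) x (evec 0) -
                          u₁ * fderiv ℝ (fun y => C y 0 1) x (evec 1))) ≤ 0) := by
  

  have hu₂0 : u₂ ≠ 0 := by rw [hu₂]; exact mul_ne_zero hnd hut0
  have hs0 : u₁^2 + u₂^2 ≠ 0 := by positivity
  have hsym := hCsymm x
  have h1 : mv (C x) u = 0 ↔ C x = C x 0 0 • !![1, -u₁/u₂; -u₁/u₂, u₁^2/u₂^2] := by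
    rw [hu]; exact part1 hsym u₁ u₂ hu₂0
  have hdiffk : ∀ k : Fin 2, fderiv ℝ (fun y => C y 0 0 - C y 1 1) x (evec k)
      = fderiv ℝ C x (evec k) 0 0 - fderiv ℝ C x (evec k) 1 1 := by
    intro k
    rw [fderiv_fun_sub (entry_diff hCdiff 0 0) (entry_diff hCdiff 1 1)]
    simp [entry_fderiv hCdiff]
  have key : C x = C x 0 0 • !![1, -u₁/u₂; -u₁/u₂, u₁^2/u₂^2] →
      ⟪u, b x - (1/2 : ℝ) •
        ∑ j, fderiv ℝ (fun y => mv (C y) (evec j)) x (mv (projRange (C x)) (evec j))⟫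
      = ⟪u, b x⟫ - (if C x 0 0 ≠ 0 then (1:ℝ) else 0) / (2 * (u₁^2 + u₂^2)) *
        (u₁ * u₂ * (u₂ * fderiv ℝ (fun y => C y 0 0 - C y 1 1) x (evec 0) -
                    u₁ * fderiv ℝ (fun y => C y 0 0 - C y 1 1) x (evec 1)) +
         (u₂^2 - u₁^2) * (u₂ * fderiv ℝ (fun y => C y 0 1) x (evec 0) -
                          u₁ * fderiv ℝ (fun y => C y 0 1) x (evec 1))) := by
    intro hform
    by_cases hc0 : C x 0 0 = 0
    · have hC0 : C x = 0 := by rw [hform, hc0, zero_smul]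
      have hproj : ∀ j : Fin 2, mv (projRange (C x)) (evec j) = 0 := by
        intro j; rw [hC0]; exact projRange_zero _
      simp only [hproj, map_zero, Finset.sum_const_zero, smul_zero, sub_zero, hc0,
        ne_eq, not_true_eq_false, if_false, zero_div, zero_mul]
    · set v : Vec 2 := vec2 u₂ (-u₁) with hvdef
      have hv : LinearMap.range (Matrix.toEuclideanLin (C x)) = ℝ ∙ v :=
        range_CM (C x 0 0) u₁ u₂ hc0 hu₂0 (C x) hform
      have hs : ‖v‖^2 = u₁^2 + u₂^2 := by
        rw [← real_inner_self_eq_norm_sq, inner2]; simp [hvdef, vec2]; ring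
      have hproj : ∀ j : Fin 2, mv (projRange (C x)) (evec j)
          = (v j / (u₁^2 + u₂^2)) • v := by
        intro j
        rw [projRange_span _ _ hv, hs]
        congr 2
        rw [inner2]
        fin_cases j <;> simp [evec, EuclideanSpace.single_apply]
      have hterm : ∀ j : Fin 2,
          fderiv ℝ (fun y => mv (C y) (evec j)) x (mv (projRange (C x)) (evec j))
          = cCLM j ((v j / (u₁^2 + u₂^2)) • (fderiv ℝ C x v)) := by
        intro j; rw [hproj j, col_fderiv hCdiff, (fderiv ℝ C x).map_smul]
      have e0 : v 0 = u₂ := by simp [hvdef, vec2]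
      have e1 : v 1 = -u₁ := by simp [hvdef, vec2]
      have hDv : fderiv ℝ C x v
          = u₂ • fderiv ℝ C x (evec 0) + (-u₁) • fderiv ℝ C x (evec 1) := by
        conv_lhs => rw [vec2_decomp_s6 v]
        rw [map_add, _root_.map_smul, _root_.map_smul, e0, e1]
      have hu0 : u 0 = u₁ := by simp [hu, vec2]
      have hu1 : u 1 = u₂ := by simp [hu, vec2]
      have hv0 : v 0 = u₂ := by simp [hvdef, vec2]
      have hv1 : v 1 = -u₁ := by simp [hvdef, vec2]
      have hsymD : ∀ k : Fin 2, fderiv ℝ C x (evec k) 1 0 = fderiv ℝ C x (evec k) 0 1 :=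
        fun k => fderiv_entry_symm hCdiff hCsymm _
      simp only [inner_sub_right, real_inner_smul_right, Fin.sum_univ_two, hterm,
        inner_add_right, inner2, hdiffk, entry_fderiv hCdiff 0 1]
      simp only [_root_.map_smul, PiLp.smul_apply, cCLM_apply, hDv, Matrix.add_apply,
        Matrix.smul_apply, hu0, hu1, hv0, hv1, smul_eq_mul, hsymD 0, hsymD 1, if_pos hc0]
      field_simp
      ring
  constructor
  · rintro ⟨hA, hineq⟩
    have hform := h1.mp hA
    exact ⟨hform, by rw [← key hform]; exact hineq⟩
  · rintro ⟨hform, hineq⟩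
    exact ⟨h1.mpr hform, by rw [key hform]; exact hineq⟩
end
end

section
/- Let D := {(x̄, x̃) ∈ ℝ² : x̃ ≥ −x̄²}. Let b(x̄, x̃) = (b̄⁰ + b̄¹x̄, b̃⁰ + b̃¹x̄ + b̃²x̃) (so the first component is affine in x̄ only) and let C : ℝ² → S² be a polynomial of degree at most 2, C(x̄, x̃) = A⁰ + A¹x̄ + A²x̃ + A³x̄² + A⁴x̄x̃ + A⁵x̃² with Aⁱ ∈ S², whose (1,1)-entry C₁₁ is an affine function of x̄ alone. Then the following are equivalent. (I) C(x) is positive semidefinite for every x ∈ D, and for every x̄ ∈ ℝ, with x := (x̄, −x̄²) and w := (2x̄, 1): C(x)w = 0 and ⟨w, b(x)⟩ − (𝟙_{C₁₁(x) ≠ 0} / (2(4x̄² + 1))) · ( 2x̄ ∂_w(C₁₁ − C₂₂)(x) + (1 − 4x̄²) ∂_w C₁₂(x) ) ≥ 0, where ∂_w := ∂₁ − 2x̄ ∂₂. (II) There exist α ≥ 0 and β ≥ 0 such that C(x̄, x̃) = [[α, −2αx̄], [−2αx̄, (4α + β)x̄² + βx̃]] for all (x̄, x̃) ∈ ℝ²,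 and either [b̃² < 2b̄¹ and (b̃¹ + 2b̄⁰)² ≤ 4(2b̄¹ − b̃²)(b̃⁰ + α)] or [b̃² = 2b̄¹, b̃¹ = −2b̄⁰ and b̃⁰ ≥ −α]. -/
open Matrix Set Asymptotics
open scoped RealInnerProductSpace NNReal

noncomputable section

attribute [local instance] Matrix.normedAddCommGroup Matrix.normedSpace

@[simp] lemma vec2_apply0 (a b : ℝ) : vec2 a b 0 = a := rfl
@[simp] lemma vec2_apply1 (a b : ℝ) : vec2 a b 1 = b := rfl

lemma inner_vec2_s10 (a b c d : ℝ) : ⟪vec2 a b, vec2 c d⟫ = a*c + b*d := by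
  simp [vec2, PiLp.inner_apply, Fin.sum_univ_two, RCLike.inner_apply]
  ring

lemma psd_qf {M : Mat 2} (h : M.PosSemidef) (s t : ℝ) :
    0 ≤ M 0 0 * s^2 + (M 0 1 + M 1 0) * (s*t) + M 1 1 * t^2 := by
  have h2 := h.dotProduct_mulVec_nonneg ![s, t]
  simp [dotProduct, Matrix.mulVec, Fin.sum_univ_two] at h2
  nlinarith [h2]

lemma psd_structure (α β : ℝ) (hα : 0 ≤ α) (hβ : 0 ≤ β) (u v : ℝ) (hv : -u^2 ≤ v) :
    Matrix.PosSemidef !![α, -2*α*u; -2*α*u, (4*α+β)*u^2 + β*v] := by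
  rw [Matrix.posSemidef_iff_dotProduct_mulVec]
  constructor
  · rw [Matrix.IsHermitian]
    ext i j
    fin_cases i <;> fin_cases j <;> simp [Matrix.conjTranspose_apply]
  · intro x
    simp [dotProduct, Matrix.mulVec, Fin.sum_univ_two]
    have hsum : 0 ≤ u^2 + v := by nlinarith
    nlinarith [sq_nonneg (x 0 - 2*u*x 1), mul_nonneg hα (sq_nonneg (x 0 - 2*u*x 1)),
      mul_nonneg (mul_nonneg hβ hsum) (sq_nonneg (x 1))]

lemma quad_nonneg_iff (a b c : ℝ) :
    (∀ x : ℝ, 0 ≤ a*x^2 + b*x + c) ↔ ((0 < a ∧ b^2 ≤ 4*a*c) ∨ (a = 0 ∧ b = 0 ∧ 0 ≤ c)) := by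
  constructor
  · intro h
    have hc : 0 ≤ c := by have := h 0; linarith
    have ha : 0 ≤ a := by
      by_contra ha
      push_neg at ha
      have hane : a ≠ 0 := ne_of_lt ha
      set x := Real.sqrt ((c+1)/(-a)) with hxdef
      have hx2 : x^2 = (c+1)/(-a) := Real.sq_sqrt (div_nonneg (by linarith) (by linarith))
      have hax : a * x^2 = -(c+1) := by
        rw [hx2, mul_div_assoc', div_eq_iff (neg_ne_zero.mpr hane)]; ring
      have hA := h x
      have hB := h (-x)
      have hBx : a * (-x)^2 + b * (-x) + c = a * x^2 - b*x + c := by ring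
      rw [hBx] at hB
      linarith
    rcases eq_or_lt_of_le ha with ha0 | hapos
    · right
      refine ⟨ha0.symm, ?_, hc⟩
      by_contra hb
      have hx := h (-(c+1)/b)
      rw [← ha0] at hx
      have : b * (-(c+1)/b) = -(c+1) := by field_simp
      rw [this] at hx
      norm_num at hx
    · left
      refine ⟨hapos, ?_⟩
      have hx := h (-b/(2*a))
      have key : a * (-b/(2*a))^2 + b * (-b/(2*a)) + c = c - b^2/(4*a) := by
        field_simp; ring
      rw [key] at hx
      have h4 : b^2/(4*a) ≤ c := by linarith
      have := (div_le_iff₀ (by positivity : (0:ℝ) < 4*a)).mp h4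
      linarith
  · rintro (⟨ha, hd⟩ | ⟨ha, hb, hc⟩) x
    · nlinarith [sq_nonneg (2*a*x + b)]
    · simp [ha, hb]; linarith

lemma poly4_zero (a b c d e : ℝ) (h : ∀ x:ℝ, a + b*x + c*x^2 + d*x^3 + e*x^4 = 0) :
    a=0 ∧ b=0 ∧ c=0 ∧ d=0 ∧ e=0 := by
  have h0 := h 0; have h1 := h 1; have hm1 := h (-1); have h2 := h 2; have hm2 := h (-2)
  norm_num at h0 h1 hm1 h2 hm2
  refine ⟨by linarith, by linarith, by linarith, by linarith, by linarith⟩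

lemma affine_nonneg (c0 c1 : ℝ) (h : ∀ u : ℝ, 0 ≤ c0 + c1*u) : c1 = 0 ∧ 0 ≤ c0 := by
  constructor
  · by_contra hc
    have hx := h (-(c0+1)/c1)
    have : c1 * (-(c0+1)/c1) = -(c0+1) := by field_simp
    rw [this] at hx
    norm_num at hx
  · simpa using h 0

lemma hasFDerivAt_poly2 (a b c d e f : ℝ) (x : Vec 2) :
    HasFDerivAt (fun y : Vec 2 => a + b*(y 0) + c*(y 1) + d*(y 0)^2 + e*(y 0 * y 1) + f*(y 1)^2)
      ((b + 2*d*(x 0) + e*(x 1)) • (EuclideanSpace.proj (0 : Fin 2) : Vec 2 →L[ℝ] ℝ)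
        + (c + e*(x 0) + 2*f*(x 1)) • (EuclideanSpace.proj (1 : Fin 2) : Vec 2 →L[ℝ] ℝ)) x := by
  have h0 : HasFDerivAt (fun y : Vec 2 => y 0)
      (EuclideanSpace.proj (0 : Fin 2) : Vec 2 →L[ℝ] ℝ) x := by
    have := (EuclideanSpace.proj (0 : Fin 2) (𝕜 := ℝ)).hasFDerivAt (x := x)
    convert this using 1
    rfl
  have h1 : HasFDerivAt (fun y : Vec 2 => y 1)
      (EuclideanSpace.proj (1 : Fin 2) : Vec 2 →L[ℝ] ℝ) x := by
    have := (EuclideanSpace.proj (1 : Fin 2) (𝕜 := ℝ)).hasFDerivAt (x := x)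
    convert this using 1
    rfl
  have H := ((((hasFDerivAt_const a x).add (h0.const_mul b)).add (h1.const_mul c)).add
      ((h0.mul h0).const_mul d)).add ((h0.mul h1).const_mul e) |>.add ((h1.mul h1).const_mul f)
  have hfun : (fun y : Vec 2 => a + b*(y 0) + c*(y 1) + d*(y 0)^2 + e*(y 0 * y 1) + f*(y 1)^2)
      = (fun y : Vec 2 => a + b*(y 0) + c*(y 1) + d*(y 0 * y 0) + e*(y 0 * y 1) + f*(y 1 * y 1)) := by
    funext y; ring
  have hd' : ((b + 2*d*(x 0) + e*(x 1)) • (EuclideanSpace.proj (0 : Fin 2) : Vec 2 →L[ℝ] ℝ)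
        + (c + e*(x 0) + 2*f*(x 1)) • (EuclideanSpace.proj (1 : Fin 2) : Vec 2 →L[ℝ] ℝ))
      = (0 + b • (EuclideanSpace.proj (0:Fin 2) : Vec 2 →L[ℝ] ℝ) + c • EuclideanSpace.proj 1 +
          d • ((x 0) • (EuclideanSpace.proj (0:Fin 2) : Vec 2 →L[ℝ] ℝ) + (x 0) • EuclideanSpace.proj 0) +
        e • ((x 0) • (EuclideanSpace.proj (1:Fin 2) : Vec 2 →L[ℝ] ℝ) + (x 1) • EuclideanSpace.proj 0) +
      f • ((x 1) • (EuclideanSpace.proj (1:Fin 2) : Vec 2 →L[ℝ] ℝ) + (x 1) • EuclideanSpace.proj 1)) := by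
    ext v
    simp [ContinuousLinearMap.add_apply, ContinuousLinearMap.smul_apply]
    ring
  rw [hfun, hd']
  exact H

lemma fderiv_poly2_e0 (a b c d e f : ℝ) (x : Vec 2) :
    fderiv ℝ (fun y : Vec 2 => a + b*(y 0) + c*(y 1) + d*(y 0)^2 + e*(y 0 * y 1) + f*(y 1)^2) x
      (evec 0) = b + 2*d*(x 0) + e*(x 1) := by
  rw [(hasFDerivAt_poly2 a b c d e f x).fderiv]
  simp [evec, EuclideanSpace.single_apply]

lemma fderiv_poly2_e1 (a b c d e f : ℝ) (x : Vec 2) :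
    fderiv ℝ (fun y : Vec 2 => a + b*(y 0) + c*(y 1) + d*(y 0)^2 + e*(y 0 * y 1) + f*(y 1)^2) x
      (evec 1) = c + e*(x 0) + 2*f*(x 1) := by
  rw [(hasFDerivAt_poly2 a b c d e f x).fderiv]
  simp [evec, EuclideanSpace.single_apply]

lemma mv_structure (α β xb : ℝ) (C : Vec 2 → Mat 2)
    (hs : ∀ p : Vec 2, C p = !![α, -2*α*(p 0); -2*α*(p 0), (4*α+β)*(p 0)^2 + β*(p 1)]) :
    mv (C (vec2 xb (-xb^2))) (vec2 (2*xb) 1) = 0 := by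
  rw [hs]
  ext i
  fin_cases i <;>
    simp [mv, Matrix.mulVec, dotProduct, Fin.sum_univ_two, vec2] <;> ring

lemma driftA (bb0 bb1 bt0 bt1 bt2 α β : ℝ) (b : Vec 2 → Vec 2)
    (hb : ∀ p : Vec 2, b p = vec2 (bb0 + bb1 * p 0) (bt0 + bt1 * p 0 + bt2 * p 1))
    (C : Vec 2 → Mat 2)
    (hs : ∀ p : Vec 2, C p = !![α, -2*α*(p 0); -2*α*(p 0), (4*α+β)*(p 0)^2 + β*(p 1)])
    (xb : ℝ) :
    ⟪vec2 (2*xb) 1, b (vec2 xb (-xb^2))⟫ -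
        (if C (vec2 xb (-xb^2)) 0 0 ≠ 0 then (1:ℝ) else 0) / (2 * (4*xb^2 + 1)) *
          ((2*xb) *
            (fderiv ℝ (fun y => C y 0 0 - C y 1 1) (vec2 xb (-xb^2)) (evec 0) -
             2*xb * fderiv ℝ (fun y => C y 0 0 - C y 1 1) (vec2 xb (-xb^2)) (evec 1)) +
           (1 - 4*xb^2) *
            (fderiv ℝ (fun y => C y 0 1) (vec2 xb (-xb^2)) (evec 0) -
             2*xb * fderiv ℝ (fun y => C y 0 1) (vec2 xb (-xb^2)) (evec 1)))
      = (2*bb1 - bt2)*xb^2 + (2*bb0 + bt1)*xb + (bt0 + α) := by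
  have hip : ⟪vec2 (2*xb) 1, b (vec2 xb (-xb^2))⟫
      = (2*xb)*(bb0 + bb1*xb) + (bt0 + bt1*xb + bt2*(-xb^2)) := by
    rw [hb]; simp [inner_vec2_s10]
  have hx00 : C (vec2 xb (-xb^2)) 0 0 = α := by rw [hs]; simp
  have hF1 : (fun y : Vec 2 => C y 0 0 - C y 1 1)
      = (fun y : Vec 2 => α + 0*(y 0) + (-β)*(y 1) + (-(4*α+β))*(y 0)^2
          + 0*(y 0 * y 1) + 0*(y 1)^2) := by
    funext y; rw [hs]; simp; try ring
  have hF2 : (fun y : Vec 2 => C y 0 1)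
      = (fun y : Vec 2 => 0 + (-2*α)*(y 0) + 0*(y 1) + 0*(y 0)^2
          + 0*(y 0 * y 1) + 0*(y 1)^2) := by
    funext y; rw [hs]; simp; try ring
  rw [hip, hx00, hF1, hF2, fderiv_poly2_e0, fderiv_poly2_e1, fderiv_poly2_e0, fderiv_poly2_e1]
  simp only [vec2_apply0, vec2_apply1]
  have hden : (4*xb^2 + 1) ≠ 0 := by positivity
  by_cases hα0 : α = 0
  · simp [hα0]; ring
  · rw [if_pos hα0]
    field_simp
    ring

lemma structB (A0 A1 A2 A3 A4 A5 : Mat 2)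
    (hA0 : A0.IsSymm) (hA1 : A1.IsSymm) (hA2 : A2.IsSymm)
    (hA3 : A3.IsSymm) (hA4 : A4.IsSymm) (hA5 : A5.IsSymm)
    (C : Vec 2 → Mat 2)
    (hC : ∀ p : Vec 2, C p =
      A0 + p 0 • A1 + p 1 • A2 + (p 0)^2 • A3 + (p 0 * p 1) • A4 + (p 1)^2 • A5)
    (hC11affine : ∃ c0 c1 : ℝ, ∀ p : Vec 2, C p 0 0 = c0 + c1 * p 0)
    (D : Set (Vec 2)) (hD : D = {p : Vec 2 | -(p 0)^2 ≤ p 1})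
    (hPSD : ∀ p ∈ D, (C p).PosSemidef)
    (hW : ∀ xb : ℝ, mv (C (vec2 xb (-xb^2))) (vec2 (2*xb) 1) = 0) :
    ∃ α : ℝ, 0 ≤ α ∧ ∃ β : ℝ, 0 ≤ β ∧
      ∀ p : Vec 2, C p = !![α, -2*α*(p 0); -2*α*(p 0), (4*α + β)*(p 0)^2 + β*(p 1)] := by
  have hent : ∀ (i j : Fin 2) (p : Vec 2), C p i j
      = A0 i j + A1 i j * (p 0) + A2 i j * (p 1) + A3 i j * (p 0)^2
        + A4 i j * (p 0 * p 1) + A5 i j * (p 1)^2 := by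
    intro i j p
    rw [hC]
    simp [Matrix.add_apply, Matrix.smul_apply, smul_eq_mul]
    ring
  obtain ⟨c0, c1, hc⟩ := hC11affine
  have haff : ∀ u : ℝ, 0 ≤ c0 + c1 * u := by
    intro u
    have hmem : vec2 u (u^2) ∈ D := by rw [hD]; simp; nlinarith [sq_nonneg u]
    have h := psd_qf (hPSD _ hmem) 1 0
    rw [hc] at h
    simpa using h
  obtain ⟨hc1, hc0⟩ := affine_nonneg c0 c1 haff
  have h00 : ∀ p : Vec 2, C p 0 0 = c0 := by
    intro p; rw [hc, hc1]; ring
  have hrow0 : ∀ xb : ℝ, C (vec2 xb (-xb^2)) 0 0 * (2*xb) + C (vec2 xb (-xb^2)) 0 1 = 0 := by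
    intro xb
    have h := congrArg (fun v : Vec 2 => v 0) (hW xb)
    simpa [mv, Matrix.mulVec, dotProduct, Fin.sum_univ_two] using h
  have hrow1 : ∀ xb : ℝ, C (vec2 xb (-xb^2)) 1 0 * (2*xb) + C (vec2 xb (-xb^2)) 1 1 = 0 := by
    intro xb
    have h := congrArg (fun v : Vec 2 => v 1) (hW xb)
    simpa [mv, Matrix.mulVec, dotProduct, Fin.sum_univ_two] using h
  have hsym : ∀ p : Vec 2, C p 1 0 = C p 0 1 := by
    intro p
    rw [hent 1 0, hent 0 1, hA0.apply 0 1, hA1.apply 0 1, hA2.apply 0 1, hA3.apply 0 1,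
      hA4.apply 0 1, hA5.apply 0 1]
  obtain ⟨ha0, ha1, ha3, ha4, ha5⟩ := poly4_zero (A0 0 1) (A1 0 1 + 2*c0)
      (A3 0 1 - A2 0 1) (-(A4 0 1)) (A5 0 1) (by
    intro x
    have h := hrow0 x
    rw [h00, hent 0 1] at h
    simp only [vec2_apply0, vec2_apply1] at h
    linear_combination h)
  have hb11 : ∀ xb : ℝ, C (vec2 xb (-xb^2)) 1 1 = 4*c0*xb^2 := by
    intro xb
    have h0 := hrow0 xb
    have h1 := hrow1 xb
    rw [hsym] at h1
    rw [h00] at h0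
    linear_combination h1 - (2*xb)*h0
  obtain ⟨hb0, hb1, hb3, hb4, hb5⟩ := poly4_zero (A0 1 1) (A1 1 1)
      (A3 1 1 - A2 1 1 - 4*c0) (-(A4 1 1)) (A5 1 1) (by
    intro x
    have h := hb11 x
    rw [hent 1 1] at h
    simp only [vec2_apply0, vec2_apply1] at h
    linear_combination h)
  have hmem01 : vec2 0 1 ∈ D := by rw [hD]; simp
  have hβ : 0 ≤ A2 1 1 := by
    have h := psd_qf (hPSD _ hmem01) 0 1
    rw [hent 1 1] at h
    simp only [vec2_apply0, vec2_apply1] at h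
    nlinarith [h]
  have key : ∀ T : ℝ, 0 < T →
      (0 < c0 ∧ (2*(A2 0 1)*T)^2 ≤ 4*c0*((A2 1 1)*T)) ∨
      (c0 = 0 ∧ 2*(A2 0 1)*T = 0 ∧ 0 ≤ (A2 1 1)*T) := by
    intro T hT
    apply (quad_nonneg_iff c0 (2*(A2 0 1)*T) ((A2 1 1)*T)).mp
    intro s
    have hmem : vec2 0 T ∈ D := by rw [hD]; simp; nlinarith
    have h := psd_qf (hPSD _ hmem) s 1
    rw [hent 0 1, hent 1 0, hent 1 1, h00] at h
    rw [hA0.apply 0 1, hA1.apply 0 1, hA2.apply 0 1, hA3.apply 0 1,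
      hA4.apply 0 1, hA5.apply 0 1] at h
    simp only [vec2_apply0, vec2_apply1] at h
    rw [ha0, ha5, hb0, hb5] at h
    ring_nf at h ⊢
    try linarith [h]
    try nlinarith [h]
  have ha2 : A2 0 1 = 0 := by
    by_contra hne
    have hsq : 0 < (A2 0 1)^2 := by
      rcases lt_or_gt_of_ne hne with h' | h' <;> nlinarith
    have hc0pos : 0 < c0 := by
      rcases key 1 one_pos with ⟨h', _⟩ | ⟨_, h', _⟩
      · exact h'
      · exfalso; apply hne; linarith
    set T := (c0*(A2 1 1)+1)/(A2 0 1)^2 with hTdef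
    have hTpos : 0 < T := by
      apply div_pos _ hsq
      nlinarith
    rcases key T hTpos with ⟨_, hdisc⟩ | ⟨hz, _, _⟩
    · have hTval : (A2 0 1)^2 * T = c0*(A2 1 1)+1 := by
        rw [hTdef, mul_div_assoc', div_eq_iff (ne_of_gt hsq)]; ring
      nlinarith [hdisc, hTpos, mul_pos hc0pos hTpos]
    · linarith
  refine ⟨c0, hc0, A2 1 1, hβ, ?_⟩
  intro p
  have e00 : C p 0 0
      = !![c0, -2*c0*(p 0); -2*c0*(p 0), (4*c0 + A2 1 1)*(p 0)^2 + A2 1 1*(p 1)] 0 0 := by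
    rw [h00]; simp
  have e01 : C p 0 1
      = !![c0, -2*c0*(p 0); -2*c0*(p 0), (4*c0 + A2 1 1)*(p 0)^2 + A2 1 1*(p 1)] 0 1 := by
    rw [hent 0 1]; simp
    linear_combination ha0 + (p 0)*ha1 + (p 1)*ha2 + (p 0)^2*(ha3+ha2)
      - (p 0 * p 1)*ha4 + (p 1)^2*ha5
  have e10 : C p 1 0
      = !![c0, -2*c0*(p 0); -2*c0*(p 0), (4*c0 + A2 1 1)*(p 0)^2 + A2 1 1*(p 1)] 1 0 := by
    rw [hsym, hent 0 1]; simp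
    linear_combination ha0 + (p 0)*ha1 + (p 1)*ha2 + (p 0)^2*(ha3+ha2)
      - (p 0 * p 1)*ha4 + (p 1)^2*ha5
  have e11 : C p 1 1
      = !![c0, -2*c0*(p 0); -2*c0*(p 0), (4*c0 + A2 1 1)*(p 0)^2 + A2 1 1*(p 1)] 1 1 := by
    rw [hent 1 1]; simp
    linear_combination hb0 + (p 0)*hb1 + (p 0)^2*hb3 - (p 0 * p 1)*hb4 + (p 1)^2*hb5
  ext i j
  fin_cases i <;> fin_cases j
  · exact e00
  · exact e01
  · exact e10
  · exact e11

/-- characterization of the invariance conditions for polynomial diffusions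
(whose first component is affine on its own) on the concave parabolic state space
`D = {x̃ ≥ −x̄²}`. -/
theorem stmt10 (bb0 bb1 bt0 bt1 bt2 : ℝ) (A0 A1 A2 A3 A4 A5 : Mat 2)
    (hA0 : A0.IsSymm) (hA1 : A1.IsSymm) (hA2 : A2.IsSymm)
    (hA3 : A3.IsSymm) (hA4 : A4.IsSymm) (hA5 : A5.IsSymm)
    (b : Vec 2 → Vec 2)
    (hb : ∀ p : Vec 2, b p = vec2 (bb0 + bb1 * p 0) (bt0 + bt1 * p 0 + bt2 * p 1))
    (C : Vec 2 → Mat 2)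
    (hC : ∀ p : Vec 2, C p =
      A0 + p 0 • A1 + p 1 • A2 + (p 0)^2 • A3 + (p 0 * p 1) • A4 + (p 1)^2 • A5)
    (hC11affine : ∃ c0 c1 : ℝ, ∀ p : Vec 2, C p 0 0 = c0 + c1 * p 0)
    (D : Set (Vec 2)) (hD : D = {p : Vec 2 | -(p 0)^2 ≤ p 1}) :
    ((∀ p ∈ D, (C p).PosSemidef) ∧
      ∀ xb : ℝ,
        mv (C (vec2 xb (-xb^2))) (vec2 (2*xb) 1) = 0 ∧
        0 ≤ ⟪vec2 (2*xb) 1, b (vec2 xb (-xb^2))⟫ -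
          (if C (vec2 xb (-xb^2)) 0 0 ≠ 0 then (1:ℝ) else 0) / (2 * (4*xb^2 + 1)) *
            ((2*xb) *
              (fderiv ℝ (fun y => C y 0 0 - C y 1 1) (vec2 xb (-xb^2)) (evec 0) -
               2*xb * fderiv ℝ (fun y => C y 0 0 - C y 1 1) (vec2 xb (-xb^2)) (evec 1)) +
             (1 - 4*xb^2) *
              (fderiv ℝ (fun y => C y 0 1) (vec2 xb (-xb^2)) (evec 0) -
               2*xb * fderiv ℝ (fun y => C y 0 1) (vec2 xb (-xb^2)) (evec 1))))
    ↔
    (∃ α : ℝ, 0 ≤ α ∧ ∃ β : ℝ, 0 ≤ β ∧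
      (∀ p : Vec 2, C p =
        !![α, -2*α*(p 0); -2*α*(p 0), (4*α + β)*(p 0)^2 + β*(p 1)]) ∧
      ((bt2 < 2*bb1 ∧ (bt1 + 2*bb0)^2 ≤ 4*(2*bb1 - bt2)*(bt0 + α)) ∨
       (bt2 = 2*bb1 ∧ bt1 = -2*bb0 ∧ -α ≤ bt0))) := by
  constructor
  · rintro ⟨hPSD, hBnd⟩
    obtain ⟨α, hα, β, hβ, hs⟩ := structB A0 A1 A2 A3 A4 A5 hA0 hA1 hA2 hA3 hA4 hA5 C hC
      hC11affine D hD hPSD (fun xb => (hBnd xb).1)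
    have hs' : ∀ p : Vec 2, C p =
        !![α, -2*α*(p 0); -2*α*(p 0), (4*α + β)*(p 0)^2 + β*(p 1)] := hs
    refine ⟨α, hα, β, hβ, hs', ?_⟩
    have hq : ∀ x : ℝ, 0 ≤ (2*bb1 - bt2)*x^2 + (2*bb0 + bt1)*x + (bt0 + α) := by
      intro x
      have h := (hBnd x).2
      rw [driftA bb0 bb1 bt0 bt1 bt2 α β b hb C hs x] at h
      exact h
    rcases (quad_nonneg_iff _ _ _).mp hq with ⟨h1, h2⟩ | ⟨h1, h2, h3⟩
    · left
      refine ⟨by linarith, ?_⟩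
      have hr : (bt1 + 2*bb0)^2 = (2*bb0 + bt1)^2 := by ring
      linarith [hr ▸ h2]
    · right
      exact ⟨by linarith, by linarith, by linarith⟩
  · rintro ⟨α, hα, β, hβ, hs, hdisc⟩
    have hs' : ∀ p : Vec 2, C p =
        !![α, -2*α*(p 0); -2*α*(p 0), (4*α+β)*(p 0)^2 + β*(p 1)] := hs
    have hq : ∀ x : ℝ, 0 ≤ (2*bb1 - bt2)*x^2 + (2*bb0 + bt1)*x + (bt0 + α) := by
      apply (quad_nonneg_iff _ _ _).mpr
      rcases hdisc with ⟨h1, h2⟩ | ⟨h1, h2, h3⟩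
      · left
        refine ⟨by linarith, ?_⟩
        have hr : (2*bb0 + bt1)^2 = (bt1 + 2*bb0)^2 := by ring
        linarith [hr ▸ h2]
      · right
        exact ⟨by linarith, by linarith, by linarith⟩
    constructor
    · intro p hp
      have hp' : -(p 0)^2 ≤ p 1 := by rw [hD] at hp; exact hp
      rw [hs' p]
      exact psd_structure α β hα hβ (p 0) (p 1) hp'
    · intro xb
      refine ⟨mv_structure α β xb C hs', ?_⟩
      rw [driftA bb0 bb1 bt0 bt1 bt2 α β b hb C hs' xb]
      exact hq xb
end
end

section
/- Let D := {(x̄, x̃) ∈ ℝ² : x̃ ≥ −x̄²} and let C : ℝ² → S² be affine, C(x̄, x̃) = A⁰ + A¹x̄ + A²x̃ with Aⁱ ∈ S². Assume that C(x) is positive semidefinite for every x ∈ D and that for every x̄ ∈ ℝ one has C(x̄, −x̄²) = C₁₁(x̄, −x̄²) · [[1, −2x̄], [−2x̄, 4x̄²]]. Then C(x) = 0 for every x ∈ ℝ². -/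
open Matrix Set Asymptotics
open scoped RealInnerProductSpace NNReal

noncomputable section

attribute [local instance] Matrix.normedAddCommGroup Matrix.normedSpace

/-- no nondegenerate affine covariance structure exists on the concave
parabolic domain `D = {x̃ ≥ −x̄²}`: the boundary rank-one condition forces `C ≡ 0`. -/
theorem stmt11 (A0 A1 A2 : Mat 2) (hA0 : A0.IsSymm) (hA1 : A1.IsSymm) (hA2 : A2.IsSymm)
    (C : Vec 2 → Mat 2) (hC : ∀ p : Vec 2, C p = A0 + p 0 • A1 + p 1 • A2)
    (D : Set (Vec 2)) (hD : D = {p : Vec 2 | -(p 0)^2 ≤ p 1})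
    (hpsd : ∀ p ∈ D, (C p).PosSemidef)
    (hbd : ∀ xb : ℝ, C (vec2 xb (-xb^2)) =
      C (vec2 xb (-xb^2)) 0 0 • !![1, -2*xb; -2*xb, 4*xb^2]) :
    ∀ p : Vec 2, C p = 0 := by
  have key : ∀ (i j : Fin 2) (xb : ℝ),
      A0 i j + xb * A1 i j + (-xb^2) * A2 i j =
      (A0 0 0 + xb * A1 0 0 + (-xb^2) * A2 0 0) * (!![1, -2*xb; -2*xb, 4*xb^2] i j) := by
    intro i j xb
    have h := congrFun (congrFun (hbd xb) i) j
    simp only [hC, vec2, PiLp.toLp_apply, Matrix.add_apply, Matrix.smul_apply, smul_eq_mul,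
      Matrix.cons_val_zero, Matrix.cons_val_one, Matrix.head_cons] at h
    exact h
  have h01 := fun xb => key 0 1 xb
  have h11 := fun xb => key 1 1 xb
  simp only [Matrix.of_apply, Matrix.cons_val_zero, Matrix.cons_val_one, Matrix.head_cons,
    Matrix.cons_val', Matrix.empty_val', Matrix.cons_val_fin_one,
    Matrix.head_fin_const] at h01 h11
  have e0 := h01 0; have e1 := h01 1; have e2 := h01 (-1); have e3 := h01 2
  have f0 := h11 0; have f1 := h11 1; have f2 := h11 (-1); have f3 := h11 2
  have f4 := h11 (-2)
  norm_num at e0 e1 e2 e3 f0 f1 f2 f3 f4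
  -- coefficient identities
  have ha2 : A2 0 0 = 0 := by linarith
  have hb0 : A0 0 1 = 0 := by linarith
  have hb1 : A1 0 1 = -2 * A0 0 0 := by linarith
  have hb2 : A2 0 1 = 2 * A1 0 0 := by linarith
  have hc0 : A0 1 1 = 0 := by linarith
  have ha1 : A1 0 0 = 0 := by linarith
  have hc1 : A1 1 1 = 0 := by linarith
  have hc2 : A2 1 1 = -4 * A0 0 0 := by linear_combination (-1/2)*f1 + (-1/2)*f2 + hc0 + 4*ha2
  -- positive semidefiniteness at (0,0) and (0,1)
  have hp1 : vec2 0 0 ∈ D := by rw [hD]; show -(vec2 0 0 0)^2 ≤ vec2 0 0 1; simp [vec2]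
  have hp2 : vec2 0 1 ∈ D := by rw [hD]; show -(vec2 0 1 0)^2 ≤ vec2 0 1 1; simp [vec2]
  have q1 := (hpsd _ hp1).dotProduct_mulVec_nonneg ![1, 0]
  have q2 := (hpsd _ hp2).dotProduct_mulVec_nonneg ![0, 1]
  simp only [hC, vec2, Matrix.cons_val_zero, Matrix.cons_val_one, Matrix.head_cons,
    zero_smul, one_smul, add_zero, zero_add, star_trivial, dotProduct,
    Matrix.mulVec, Fin.sum_univ_two, Matrix.add_apply, Matrix.smul_apply, smul_eq_mul,
    mul_one, mul_zero, one_mul, zero_mul, Matrix.zero_apply] at q1 q2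
  have ha0 : A0 0 0 = 0 := by linarith [q1, q2, hc0, hc2]
  -- all coefficient matrices vanish
  have hA0z : A0 = 0 := by
    ext i j
    fin_cases i <;> fin_cases j <;>
      simp_all [show A0 1 0 = A0 0 1 from (hA0.apply 0 1)]
  have hA1z : A1 = 0 := by
    ext i j
    fin_cases i <;> fin_cases j <;>
      simp_all [show A1 1 0 = A1 0 1 from (hA1.apply 0 1)]
  have hA2z : A2 = 0 := by
    ext i j
    fin_cases i <;> fin_cases j <;>
      simp_all [show A2 1 0 = A2 0 1 from (hA2.apply 0 1)]
  intro p
  rw [hC, hA0z, hA1z, hA2z]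
  simp
end
end
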